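/- For 1 ≤ i ≤ n−1 set σ̃_i = (z_i − z_{i+1}) t_{s_i} + c_0 π_i ∈ H (the intertwiner σ_i = t_{s_i} + c_0 π_i/(z_i − z_{i+1}) with denominators cleared). Then σ̃_i² = c_0² π_i² − (z_i − z_{i+1})², which is the denominator-cleared form of the identity σ_i² = 1 − (c_0 π_i/(z_i − z_{i+1}))². -/

import Mathlib

/-- `ζ = e^{2πi/r}`. -/
noncomputable def zeta (r : ℕ) : ℂ := Complex.exp (2 * Real.pi * Complex.I / r)

theorem zeta_pow_self {r : ℕ} (hr : 0 < r) : zeta r ^ r = 1 := by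
  rw [zeta, ← Complex.exp_nat_mul, mul_comm, div_mul_cancel₀, Complex.exp_two_pi_mul_I]
  exact_mod_cast Nat.cast_ne_zero.mpr hr.ne'

theorem zeta_zpow_root (r : ℕ) (l : ℤ) : (zeta r ^ l) ^ r = 1 := by
  rcases Nat.eq_zero_or_pos r with h | h
  · rw [h, pow_zero]
  · rw [← zpow_natCast, ← zpow_mul, mul_comm, zpow_mul, zpow_natCast,
      zeta_pow_self h, one_zpow]

/-- The elements of `G(r,1,n)`: `n × n` monomial matrices whose nonzero entries are
`r`-th roots of unity. -/
def IsGMonomial (r n : ℕ) (w : Matrix (Fin n) (Fin n) ℂ) : Prop :=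
  ∃ (σ : Equiv.Perm (Fin n)) (a : Fin n → ℂ), (∀ i, a i ^ r = 1) ∧
    ∀ i j, w i j = if i = σ j then a j else 0

theorem IsGMonomial.mul {r n : ℕ} {w v : Matrix (Fin n) (Fin n) ℂ}
    (hw : IsGMonomial r n w) (hv : IsGMonomial r n v) : IsGMonomial r n (w * v) := by
  obtain ⟨σ, a, ha, hwe⟩ := hw
  obtain ⟨τ, b, hb, hve⟩ := hv
  refine ⟨σ * τ, fun j => a (τ j) * b j, fun j => by rw [mul_pow, ha, hb, one_mul], ?_⟩
  intro i j
  rw [Matrix.mul_apply, Finset.sum_eq_single (τ j)]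
  · rw [hwe, hve, if_pos rfl, Equiv.Perm.mul_apply]
    simp [ite_mul]
  · intro k _ hk
    rw [hve, if_neg hk, mul_zero]
  · simp

/-- The diagonal matrix `ζ_i^l`, with `ζ^l` in position `i` and `1`'s elsewhere. -/
noncomputable def zmat (r n : ℕ) (i : Fin n) (l : ℤ) : Matrix (Fin n) (Fin n) ℂ :=
  Matrix.diagonal (fun a => if a = i then zeta r ^ l else 1)

theorem isGMonomial_zmat (r : ℕ) {n : ℕ} (i : Fin n) (l : ℤ) :
    IsGMonomial r n (zmat r n i l) := by
  refine ⟨1, fun b => if b = i then zeta r ^ l else 1, ?_, ?_⟩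
  · intro b
    dsimp only
    split
    · exact zeta_zpow_root r l
    · exact one_pow r
  · intro a b
    rcases eq_or_ne a b with h | h
    · subst h; simp [zmat, Matrix.diagonal_apply]
    · simp [zmat, Matrix.diagonal_apply_ne _ h, Equiv.Perm.one_apply, h]

/-- The transposition (permutation) matrix `s_{ij}` interchanging coordinates `i` and `j`. -/
def smat {n : ℕ} (i j : Fin n) : Matrix (Fin n) (Fin n) ℂ :=
  Matrix.of fun a b => if a = Equiv.swap i j b then 1 else 0

theorem isGMonomial_smat (r : ℕ) {n : ℕ} (i j : Fin n) : IsGMonomial r n (smat i j) :=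
  ⟨Equiv.swap i j, fun _ => 1, fun _ => one_pow r, fun a b => by simp [smat]⟩

/-- The group `G(r,1,n)` of monomial matrices, as a subtype of matrices. -/
def GMon (r n : ℕ) : Type := {w : Matrix (Fin n) (Fin n) ℂ // IsGMonomial r n w}

/-- `ζ_i^l` as an element of `G(r,1,n)`. -/
noncomputable def zetaW (r : ℕ) {n : ℕ} (i : Fin n) (l : ℤ) : GMon r n :=
  ⟨zmat r n i l, isGMonomial_zmat r i l⟩

/-- `s_{ij}` as an element of `G(r,1,n)`. -/
noncomputable def sW (r : ℕ) {n : ℕ} (i j : Fin n) : GMon r n :=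
  ⟨smat i j, isGMonomial_smat r i j⟩

/-- The reflection `ζ_i^l s_{ij} ζ_i^{-l}` as an element of `G(r,1,n)`. -/
noncomputable def reflW (r : ℕ) {n : ℕ} (i j : Fin n) (l : ℤ) : GMon r n :=
  ⟨zmat r n i l * smat i j * zmat r n i (-l),
    ((isGMonomial_zmat r i l).mul (isGMonomial_smat r i j)).mul (isGMonomial_zmat r i (-l))⟩

/-- The element `ζ_i^l ζ_j^{-l}` of `G(r,1,n)`. -/
noncomputable def pairW (r : ℕ) {n : ℕ} (i j : Fin n) (l : ℤ) : GMon r n :=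
  ⟨zmat r n i l * zmat r n j (-l),
    (isGMonomial_zmat r i l).mul (isGMonomial_zmat r j (-l))⟩

/-- Generators of the rational Cherednik algebra of `G(r,1,n)`:
`x_1, …, x_n`, `y_1, …, y_n` and `t_w` for `w ∈ G(r,1,n)`. -/
inductive CGen (r n : ℕ) where
  | X (i : Fin n) : CGen r n
  | Y (i : Fin n) : CGen r n
  | T (w : GMon r n) : CGen r n

/-- The defining relations of the rational Cherednik algebra of `G(r,1,n)` with
parameters `κ, c₀, c_1, …, c_{r-1}`. -/
inductive CRel (r n : ℕ) (κ c₀ : ℂ) (c : ℕ → ℂ) :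
    FreeAlgebra ℂ (CGen r n) → FreeAlgebra ℂ (CGen r n) → Prop
  | t_mul (u w v : GMon r n) : u.1 = w.1 * v.1 → CRel r n κ c₀ c
      (FreeAlgebra.ι ℂ (.T u)) (FreeAlgebra.ι ℂ (.T w) * FreeAlgebra.ι ℂ (.T v))
  | t_one (u : GMon r n) : u.1 = 1 → CRel r n κ c₀ c (FreeAlgebra.ι ℂ (.T u)) 1
  | t_x (w : GMon r n) (i : Fin n) : CRel r n κ c₀ c
      (FreeAlgebra.ι ℂ (.T w) * FreeAlgebra.ι ℂ (.X i))
      (∑ j, (w.1⁻¹ i j) • (FreeAlgebra.ι ℂ (.X j) * FreeAlgebra.ι ℂ (.T w)))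
  | t_y (w : GMon r n) (i : Fin n) : CRel r n κ c₀ c
      (FreeAlgebra.ι ℂ (.T w) * FreeAlgebra.ι ℂ (.Y i))
      (∑ j, (w.1 j i) • (FreeAlgebra.ι ℂ (.Y j) * FreeAlgebra.ι ℂ (.T w)))
  | xx (i j : Fin n) : CRel r n κ c₀ c
      (FreeAlgebra.ι ℂ (.X i) * FreeAlgebra.ι ℂ (.X j))
      (FreeAlgebra.ι ℂ (.X j) * FreeAlgebra.ι ℂ (.X i))
  | yy (i j : Fin n) : CRel r n κ c₀ c
      (FreeAlgebra.ι ℂ (.Y i) * FreeAlgebra.ι ℂ (.Y j))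
      (FreeAlgebra.ι ℂ (.Y j) * FreeAlgebra.ι ℂ (.Y i))
  | yx_ne (i j : Fin n) : i ≠ j → CRel r n κ c₀ c
      (FreeAlgebra.ι ℂ (.Y i) * FreeAlgebra.ι ℂ (.X j))
      (FreeAlgebra.ι ℂ (.X j) * FreeAlgebra.ι ℂ (.Y i) +
        c₀ • ∑ l ∈ Finset.range r,
          (zeta r ^ (-(l : ℤ))) • FreeAlgebra.ι ℂ (.T (reflW r i j (l : ℤ))))
  | yx_eq (i : Fin n) : CRel r n κ c₀ c
      (FreeAlgebra.ι ℂ (.Y i) * FreeAlgebra.ι ℂ (.X i))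
      (FreeAlgebra.ι ℂ (.X i) * FreeAlgebra.ι ℂ (.Y i) + κ • (1 : FreeAlgebra ℂ (CGen r n))
        - ∑ l ∈ Finset.Ico 1 r,
            (c l * (1 - zeta r ^ (-(l : ℤ)))) • FreeAlgebra.ι ℂ (.T (zetaW r i (l : ℤ)))
        - c₀ • ∑ j ∈ Finset.univ.erase i, ∑ l ∈ Finset.range r,
            FreeAlgebra.ι ℂ (.T (reflW r i j (l : ℤ))))

variable (r n : ℕ) (κ c₀ : ℂ) (c : ℕ → ℂ)

/-- The image of `x_i` in the rational Cherednik algebra of `G(r,1,n)`. -/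
noncomputable def cX (i : Fin n) : RingQuot (CRel r n κ c₀ c) :=
  RingQuot.mkAlgHom ℂ (CRel r n κ c₀ c) (FreeAlgebra.ι ℂ (.X i))

/-- The image of `y_i` in the rational Cherednik algebra of `G(r,1,n)`. -/
noncomputable def cY (i : Fin n) : RingQuot (CRel r n κ c₀ c) :=
  RingQuot.mkAlgHom ℂ (CRel r n κ c₀ c) (FreeAlgebra.ι ℂ (.Y i))

/-- The image of `t_w` in the rational Cherednik algebra of `G(r,1,n)`. -/
noncomputable def cT (w : GMon r n) : RingQuot (CRel r n κ c₀ c) :=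
  RingQuot.mkAlgHom ℂ (CRel r n κ c₀ c) (FreeAlgebra.ι ℂ (.T w))

/-- `φ_i = Σ_{j<i} Σ_{l=0}^{r-1} t_{ζ_i^l s_{ij} ζ_i^{-l}}`. -/
noncomputable def cPhi (i : Fin n) : RingQuot (CRel r n κ c₀ c) :=
  ∑ j ∈ Finset.univ.filter (fun j : Fin n => j < i), ∑ l ∈ Finset.range r,
    cT r n κ c₀ c (reflW r i j (l : ℤ))

/-- The Dunkl–Opdam–Cherednik element `z_i = y_i x_i + c₀ φ_i`. -/
noncomputable def cz (i : Fin n) : RingQuot (CRel r n κ c₀ c) :=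
  cY r n κ c₀ c i * cX r n κ c₀ c i + c₀ • cPhi r n κ c₀ c i

/-- `π_i = Σ_{l=0}^{r-1} t_{ζ_i^l ζ_{i+1}^{-l}}` (here with the two indices `i`, `i+1`
passed separately). -/
noncomputable def cPi (i j : Fin n) : RingQuot (CRel r n κ c₀ c) :=
  ∑ l ∈ Finset.range r, cT r n κ c₀ c (pairW r i j (l : ℤ))

/-- The idempotent `ε_{ij} = (1/r) Σ_{l=0}^{r-1} ζ^{-lj} t_{ζ_i^l}`. -/
noncomputable def cEps (i : Fin n) (j : ℤ) : RingQuot (CRel r n κ c₀ c) :=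
  (r : ℂ)⁻¹ • ∑ l ∈ Finset.range r, (zeta r ^ (-(l : ℤ) * j)) • cT r n κ c₀ c (zetaW r i (l : ℤ))

/-- The reparametrised constants `d_j = Σ_{l=1}^{r-1} ζ^{lj} c_l`. -/
noncomputable def dpar (j : ℤ) : ℂ := ∑ l ∈ Finset.Ico 1 r, zeta r ^ ((l : ℤ) * j) * c l

/-- The denominator-cleared intertwiner `σ̃_i = (z_i - z_{i+1}) t_{s_i} + c₀ π_i`. -/
noncomputable def cSigma (i j : Fin n) : RingQuot (CRel r n κ c₀ c) :=
  (cz r n κ c₀ c i - cz r n κ c₀ c j) * cT r n κ c₀ c (sW r i j) + c₀ • cPi r n κ c₀ c i j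


-- ===== auxiliary matrix lemmas =====

lemma zeta_ne_zero (r : ℕ) : zeta r ≠ 0 := Complex.exp_ne_zero _

lemma zmat_mul_zmat_same (r n : ℕ) (a : Fin n) (l m : ℤ) :
    zmat r n a l * zmat r n a m = zmat r n a (l + m) := by
  rw [zmat, zmat, zmat, Matrix.diagonal_mul_diagonal]
  have : (fun i : Fin n => (if i = a then zeta r ^ l else 1) *
      (if i = a then zeta r ^ m else 1)) =
      fun i : Fin n => if i = a then zeta r ^ (l + m) else 1 := by
    funext x
    by_cases h : x = a <;> simp [h, zpow_add₀ (zeta_ne_zero r)]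
  rw [this]

lemma zmat_zero (r n : ℕ) (a : Fin n) : zmat r n a 0 = 1 := by
  rw [zmat]
  have : (fun x : Fin n => if x = a then zeta r ^ (0:ℤ) else 1) = fun _ => 1 := by
    funext x; split <;> simp
  rw [this, Matrix.diagonal_one]

lemma zmat_comm (r n : ℕ) (a b : Fin n) (l m : ℤ) :
    zmat r n a l * zmat r n b m = zmat r n b m * zmat r n a l := by
  rw [zmat, zmat, Matrix.diagonal_mul_diagonal, Matrix.diagonal_mul_diagonal]
  have : (fun i : Fin n => (if i = a then zeta r ^ l else 1) *
      (if i = b then zeta r ^ m else 1)) =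
      fun i : Fin n => (if i = b then zeta r ^ m else 1) *
      (if i = a then zeta r ^ l else 1) := by
    funext x; ring
  rw [this]

lemma zmat_period {r : ℕ} (hr : 1 ≤ r) (n : ℕ) (a : Fin n) (l : ℤ) :
    zmat r n a (l + r) = zmat r n a l := by
  rw [zmat, zmat]
  have : (fun x : Fin n => if x = a then zeta r ^ (l + (r:ℤ)) else 1) =
      fun x : Fin n => if x = a then zeta r ^ l else 1 := by
    funext x
    by_cases h : x = a <;>
      simp [h, zpow_add₀ (zeta_ne_zero r), zpow_natCast, zeta_pow_self hr]
  rw [this]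

lemma smat_mul_self {n : ℕ} (a b : Fin n) : smat a b * smat a b = 1 := by
  ext x y
  rw [Matrix.mul_apply, Finset.sum_eq_single (Equiv.swap a b y)]
  · by_cases h : x = y
    · subst h
      simp [smat, Matrix.one_apply, Equiv.swap_apply_self]
    · have h2 : ¬ x = Equiv.swap a b (Equiv.swap a b y) := by
        rwa [Equiv.swap_apply_self]
      simp [smat, Matrix.one_apply, h, h2]
  · intro k _ hk
    have : ¬ k = Equiv.swap a b y := hk
    simp [smat, this]
  · simp

lemma smat_mul_zmat (r n : ℕ) (a b k : Fin n) (l : ℤ) :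
    smat a b * zmat r n k l = zmat r n (Equiv.swap a b k) l * smat a b := by
  ext x y
  rw [Matrix.mul_apply, Matrix.mul_apply]
  rw [Finset.sum_eq_single y, Finset.sum_eq_single x]
  pick_goal 2
  · intro k' _ hk'; rw [zmat, Matrix.diagonal_apply_ne _ (Ne.symm hk'), zero_mul]
  pick_goal 2
  · simp
  pick_goal 2
  · intro k' _ hk'
    rw [zmat]
    rw [Matrix.diagonal_apply_ne _ hk', mul_zero]
  pick_goal 2
  · simp [smat]
  · by_cases hxy : x = Equiv.swap a b y
    · subst hxy
      simp only [smat, zmat, Matrix.of_apply, Matrix.diagonal_apply_eq, if_pos rfl,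
        one_mul, mul_one]
      by_cases hyk : y = k
      · subst hyk; simp
      · have : ¬ Equiv.swap a b y = Equiv.swap a b k := by
          simpa [Equiv.apply_eq_iff_eq] using hyk
        simp [hyk, this]
    · simp [smat, hxy]

lemma smat_mul_smat {n : ℕ} (a b k m : Fin n) :
    smat a b * smat k m =
      smat (Equiv.swap a b k) (Equiv.swap a b m) * smat a b := by
  ext x y
  rw [Matrix.mul_apply, Matrix.mul_apply]
  rw [Finset.sum_eq_single (Equiv.swap k m y), Finset.sum_eq_single (Equiv.swap a b y)]
  · simp only [smat, Matrix.of_apply, if_pos rfl, mul_one, one_mul]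
    have : Equiv.swap ((Equiv.swap a b) k) ((Equiv.swap a b) m) ((Equiv.swap a b) y)
        = (Equiv.swap a b) ((Equiv.swap k m) y) := by
      rw [Equiv.swap_apply_apply]
      simp [Equiv.Perm.mul_apply]
    rw [this]
  · intro k' _ hk'
    simp [smat, hk']
  · simp [smat]
  · intro k' _ hk'
    simp [smat, hk']
  · simp [smat]

lemma smat_comm' {n : ℕ} (a b : Fin n) : smat a b = smat b a := by
  unfold smat; rw [Equiv.swap_comm]

-- ===== quotient-level base lemmas =====

lemma cT_hom (u w v : GMon r n) (h : u.1 = w.1 * v.1) :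
    cT r n κ c₀ c u = cT r n κ c₀ c w * cT r n κ c₀ c v := by
  have := RingQuot.mkAlgHom_rel ℂ (CRel.t_mul (r := r) (n := n) (κ := κ) (c₀ := c₀) (c := c) u w v h)
  simpa [cT, map_mul] using this

lemma cT_one' (u : GMon r n) (h : u.1 = 1) : cT r n κ c₀ c u = 1 := by
  have := RingQuot.mkAlgHom_rel ℂ (CRel.t_one (r := r) (n := n) (κ := κ) (c₀ := c₀) (c := c) u h)
  simpa [cT, map_one] using this

lemma cT_congr (u v : GMon r n) (h : u.1 = v.1) :
    cT r n κ c₀ c u = cT r n κ c₀ c v := by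
  have : u = v := Subtype.ext h
  rw [this]

lemma rel_tX (w : GMon r n) (i : Fin n) :
    cT r n κ c₀ c w * cX r n κ c₀ c i =
      ∑ j, (w.1⁻¹ i j) • (cX r n κ c₀ c j * cT r n κ c₀ c w) := by
  have := RingQuot.mkAlgHom_rel ℂ (CRel.t_x (r := r) (n := n) (κ := κ) (c₀ := c₀) (c := c) w i)
  simpa [cT, cX, map_mul, map_sum, map_smul] using this

lemma rel_tY (w : GMon r n) (i : Fin n) :
    cT r n κ c₀ c w * cY r n κ c₀ c i =
      ∑ j, (w.1 j i) • (cY r n κ c₀ c j * cT r n κ c₀ c w) := by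
  have := RingQuot.mkAlgHom_rel ℂ (CRel.t_y (r := r) (n := n) (κ := κ) (c₀ := c₀) (c := c) w i)
  simpa [cT, cY, map_mul, map_sum, map_smul] using this

lemma tX_single (w : GMon r n) (v : Matrix (Fin n) (Fin n) ℂ) (hv : w.1 * v = 1)
    (k j : Fin n) (coef : ℂ) (hrow : ∀ m, v k m = if m = j then coef else 0) :
    cT r n κ c₀ c w * cX r n κ c₀ c k = coef • (cX r n κ c₀ c j * cT r n κ c₀ c w) := by
  rw [rel_tX, Matrix.inv_eq_right_inv hv]
  rw [Finset.sum_eq_single j]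
  · rw [hrow, if_pos rfl]
  · intro m _ hm
    rw [hrow, if_neg hm, zero_smul]
  · simp

lemma tY_single (w : GMon r n) (k j : Fin n) (coef : ℂ)
    (hcol : ∀ m, w.1 m k = if m = j then coef else 0) :
    cT r n κ c₀ c w * cY r n κ c₀ c k = coef • (cY r n κ c₀ c j * cT r n κ c₀ c w) := by
  rw [rel_tY, Finset.sum_eq_single j]
  · rw [hcol, if_pos rfl]
  · intro m _ hm
    rw [hcol, if_neg hm, zero_smul]
  · simp

-- ===== helper for associativity juggling =====

lemma hmul {H : Type*} [Monoid H] {x y u v : H} (h : x * y = u * v) (w : H) :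
    x * (y * w) = u * (v * w) := by rw [← mul_assoc, h, mul_assoc]

-- ===== T-level group lemmas =====

lemma Tz_mul (a : Fin n) (l m : ℤ) :
    cT r n κ c₀ c (zetaW r a l) * cT r n κ c₀ c (zetaW r a m)
      = cT r n κ c₀ c (zetaW r a (l + m)) :=
  (cT_hom r n κ c₀ c (zetaW r a (l + m)) (zetaW r a l) (zetaW r a m)
    (zmat_mul_zmat_same r n a l m).symm).symm

lemma Tz_zero (a : Fin n) : cT r n κ c₀ c (zetaW r a 0) = 1 :=
  cT_one' r n κ c₀ c _ (zmat_zero r n a)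

lemma Tz_inv (a : Fin n) (l : ℤ) :
    cT r n κ c₀ c (zetaW r a l) * cT r n κ c₀ c (zetaW r a (-l)) = 1 := by
  rw [Tz_mul, add_neg_cancel, Tz_zero]

lemma T_swap (A B A' B' : GMon r n) (h : A.1 * B.1 = A'.1 * B'.1) :
    cT r n κ c₀ c A * cT r n κ c₀ c B = cT r n κ c₀ c A' * cT r n κ c₀ c B' := by
  rw [← cT_hom r n κ c₀ c ⟨A.1 * B.1, A.2.mul B.2⟩ A B rfl,
      cT_congr r n κ c₀ c ⟨A.1 * B.1, A.2.mul B.2⟩ ⟨A'.1 * B'.1, A'.2.mul B'.2⟩ h,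
      cT_hom r n κ c₀ c ⟨A'.1 * B'.1, A'.2.mul B'.2⟩ A' B' rfl]

lemma Tz_comm (a b : Fin n) (l m : ℤ) :
    cT r n κ c₀ c (zetaW r a l) * cT r n κ c₀ c (zetaW r b m)
      = cT r n κ c₀ c (zetaW r b m) * cT r n κ c₀ c (zetaW r a l) :=
  T_swap r n κ c₀ c _ _ _ _ (zmat_comm r n a b l m)

lemma Ts_sq (a b : Fin n) :
    cT r n κ c₀ c (sW r a b) * cT r n κ c₀ c (sW r a b) = 1 := by
  rw [← cT_hom r n κ c₀ c ⟨smat a b * smat a b,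
    (isGMonomial_smat r a b).mul (isGMonomial_smat r a b)⟩ (sW r a b) (sW r a b) rfl]
  exact cT_one' r n κ c₀ c _ (smat_mul_self a b)

lemma Ts_Tz (a b k : Fin n) (l : ℤ) :
    cT r n κ c₀ c (sW r a b) * cT r n κ c₀ c (zetaW r k l)
      = cT r n κ c₀ c (zetaW r (Equiv.swap a b k) l) * cT r n κ c₀ c (sW r a b) :=
  T_swap r n κ c₀ c _ _ _ _ (smat_mul_zmat r n a b k l)

lemma Ts_Ts (a b k m : Fin n) :
    cT r n κ c₀ c (sW r a b) * cT r n κ c₀ c (sW r k m)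
      = cT r n κ c₀ c (sW r (Equiv.swap a b k) (Equiv.swap a b m))
          * cT r n κ c₀ c (sW r a b) :=
  T_swap r n κ c₀ c _ _ _ _ (smat_mul_smat a b k m)

lemma Tz_period (hr : 1 ≤ r) (a : Fin n) (l : ℤ) :
    cT r n κ c₀ c (zetaW r a (l + r)) = cT r n κ c₀ c (zetaW r a l) :=
  cT_congr r n κ c₀ c _ _ (zmat_period hr n a l)

lemma Trefl_decomp (i j : Fin n) (l : ℤ) :
    cT r n κ c₀ c (reflW r i j l)
      = cT r n κ c₀ c (zetaW r i l) * cT r n κ c₀ c (sW r i j)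
          * cT r n κ c₀ c (zetaW r i (-l)) := by
  rw [cT_hom r n κ c₀ c (reflW r i j l)
      ⟨zmat r n i l * smat i j, (isGMonomial_zmat r i l).mul (isGMonomial_smat r i j)⟩
      (zetaW r i (-l)) rfl,
    cT_hom r n κ c₀ c ⟨zmat r n i l * smat i j, (isGMonomial_zmat r i l).mul (isGMonomial_smat r i j)⟩ (zetaW r i l) (sW r i j) rfl]

lemma Tpair_decomp (i j : Fin n) (l : ℤ) :
    cT r n κ c₀ c (pairW r i j l)
      = cT r n κ c₀ c (zetaW r i l) * cT r n κ c₀ c (zetaW r j (-l)) :=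
  cT_hom r n κ c₀ c (pairW r i j l) (zetaW r i l) (zetaW r j (-l)) rfl

lemma zmat_period_neg (hr : 1 ≤ r) (a : Fin n) (l : ℤ) :
    zmat r n a (-(l + r)) = zmat r n a (-l) := by
  have h := zmat_period hr n a (-(l + (r:ℤ)))
  rw [show -(l + (r:ℤ)) + r = -l by ring] at h
  exact h.symm

lemma Trefl_period (hr : 1 ≤ r) (i j : Fin n) (l : ℤ) :
    cT r n κ c₀ c (reflW r i j (l + r)) = cT r n κ c₀ c (reflW r i j l) := by
  refine cT_congr r n κ c₀ c _ _ ?_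
  show zmat r n i (l + r) * smat i j * zmat r n i (-(l + r))
      = zmat r n i l * smat i j * zmat r n i (-l)
  rw [zmat_period hr, zmat_period_neg r n hr]

lemma Tpair_period (hr : 1 ≤ r) (i j : Fin n) (l : ℤ) :
    cT r n κ c₀ c (pairW r i j (l + r)) = cT r n κ c₀ c (pairW r i j l) := by
  refine cT_congr r n κ c₀ c _ _ ?_
  show zmat r n i (l + r) * zmat r n j (-(l + r)) = zmat r n i l * zmat r n j (-l)
  rw [zmat_period hr, zmat_period_neg r n hr]

-- ===== commutation with X and Y =====

lemma Ts_X (a b k : Fin n) :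
    cT r n κ c₀ c (sW r a b) * cX r n κ c₀ c k
      = cX r n κ c₀ c (Equiv.swap a b k) * cT r n κ c₀ c (sW r a b) := by
  have hrow : ∀ m, (smat a b : Matrix (Fin n) (Fin n) ℂ) k m
      = if m = Equiv.swap a b k then 1 else 0 := by
    intro m
    simp only [smat, Matrix.of_apply]
    by_cases h : m = Equiv.swap a b k
    · subst h; simp [Equiv.swap_apply_self]
    · have h2 : ¬ k = Equiv.swap a b m := fun hc => h (by rw [hc, Equiv.swap_apply_self])
      simp [h, h2]
  have := tX_single r n κ c₀ c (sW r a b) (smat a b) (smat_mul_self a b) k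
    (Equiv.swap a b k) 1 hrow
  simpa using this

lemma Ts_Y (a b k : Fin n) :
    cT r n κ c₀ c (sW r a b) * cY r n κ c₀ c k
      = cY r n κ c₀ c (Equiv.swap a b k) * cT r n κ c₀ c (sW r a b) := by
  have hcol : ∀ m, (sW r a b).1 m k = if m = Equiv.swap a b k then 1 else 0 :=
    fun m => rfl
  have := tY_single r n κ c₀ c (sW r a b) k (Equiv.swap a b k) 1 hcol
  simpa using this

lemma Tz_X (a k : Fin n) (l : ℤ) :
    cT r n κ c₀ c (zetaW r a l) * cX r n κ c₀ c k
      = (if k = a then zeta r ^ (-l) else 1) •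
          (cX r n κ c₀ c k * cT r n κ c₀ c (zetaW r a l)) := by
  have hv : (zetaW r a l).1 * zmat r n a (-l) = 1 := by
    show zmat r n a l * zmat r n a (-l) = 1
    rw [zmat_mul_zmat_same, add_neg_cancel, zmat_zero]
  have hrow : ∀ m, zmat r n a (-l) k m
      = if m = k then (if k = a then zeta r ^ (-l) else 1) else 0 := by
    intro m
    by_cases h : m = k
    · subst h; simp [zmat, Matrix.diagonal_apply]
    · simp [zmat, Matrix.diagonal_apply_ne _ (Ne.symm h), h]
  exact tX_single r n κ c₀ c (zetaW r a l) (zmat r n a (-l)) hv k k _ hrow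

lemma Tz_Y (a k : Fin n) (l : ℤ) :
    cT r n κ c₀ c (zetaW r a l) * cY r n κ c₀ c k
      = (if k = a then zeta r ^ l else 1) •
          (cY r n κ c₀ c k * cT r n κ c₀ c (zetaW r a l)) := by
  have hcol : ∀ m, (zetaW r a l).1 m k
      = if m = k then (if k = a then zeta r ^ l else 1) else 0 := by
    intro m
    by_cases h : m = k
    · subst h; simp [zetaW, zmat, Matrix.diagonal_apply]
    · simp [zetaW, zmat, Matrix.diagonal_apply_ne _ h, h]
  exact tY_single r n κ c₀ c (zetaW r a l) k k _ hcol

lemma Tz_YX (a k : Fin n) (l : ℤ) :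
    cT r n κ c₀ c (zetaW r a l) * (cY r n κ c₀ c k * cX r n κ c₀ c k)
      = (cY r n κ c₀ c k * cX r n κ c₀ c k) * cT r n κ c₀ c (zetaW r a l) := by
  rw [← mul_assoc, Tz_Y, smul_mul_assoc, mul_assoc, Tz_X, mul_smul_comm, smul_smul]
  have : (if k = a then zeta r ^ l else 1) * (if k = a then zeta r ^ (-l) else 1) = 1 := by
    by_cases h : k = a
    · simp [h, zpow_neg, mul_inv_cancel₀ (zpow_ne_zero _ (zeta_ne_zero r))]
    · simp [h]
  rw [this, one_smul, mul_assoc]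

lemma Ts_YX (a b k : Fin n) :
    cT r n κ c₀ c (sW r a b) * (cY r n κ c₀ c k * cX r n κ c₀ c k)
      = (cY r n κ c₀ c (Equiv.swap a b k) * cX r n κ c₀ c (Equiv.swap a b k))
          * cT r n κ c₀ c (sW r a b) := by
  rw [← mul_assoc, Ts_Y, mul_assoc, Ts_X, mul_assoc]

-- ===== conjugation of reflections =====

lemma Ts_Trefl (a b k j : Fin n) (l : ℤ) :
    cT r n κ c₀ c (sW r a b) * cT r n κ c₀ c (reflW r k j l)
      = cT r n κ c₀ c (reflW r (Equiv.swap a b k) (Equiv.swap a b j) l)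
          * cT r n κ c₀ c (sW r a b) := by
  rw [Trefl_decomp, Trefl_decomp]
  rw [show cT r n κ c₀ c (zetaW r k l) * cT r n κ c₀ c (sW r k j)
        * cT r n κ c₀ c (zetaW r k (-l))
      = cT r n κ c₀ c (zetaW r k l) * (cT r n κ c₀ c (sW r k j)
        * cT r n κ c₀ c (zetaW r k (-l))) from mul_assoc _ _ _]
  rw [← mul_assoc, Ts_Tz, mul_assoc, hmul (Ts_Ts r n κ c₀ c a b k j),
    Ts_Tz r n κ c₀ c a b k (-l)]
  simp only [← mul_assoc]

lemma Ts_Tpair (a b k j : Fin n) (l : ℤ) :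
    cT r n κ c₀ c (sW r a b) * cT r n κ c₀ c (pairW r k j l)
      = cT r n κ c₀ c (pairW r (Equiv.swap a b k) (Equiv.swap a b j) l)
          * cT r n κ c₀ c (sW r a b) := by
  rw [Tpair_decomp, Tpair_decomp, ← mul_assoc, Ts_Tz, mul_assoc,
    Ts_Tz r n κ c₀ c a b j (-l), ← mul_assoc]

lemma hmul1 {H : Type*} [Monoid H] {x y z : H} (h : x * y = z) (w : H) :
    x * (y * w) = z * w := by rw [← mul_assoc, h]

-- ===== conjugation of reflections by diagonal elements =====

lemma Tz_Trefl (a k j : Fin n) (hkj : k ≠ j) (m l : ℤ) :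
    cT r n κ c₀ c (zetaW r a m) * cT r n κ c₀ c (reflW r k j l)
      = cT r n κ c₀ c (reflW r k j
          (l + (if a = k then m else 0) - (if a = j then m else 0)))
          * cT r n κ c₀ c (zetaW r a m) := by
  have f1 : ∀ t, cT r n κ c₀ c (sW r k j) * cT r n κ c₀ c (zetaW r k t)
      = cT r n κ c₀ c (zetaW r j t) * cT r n κ c₀ c (sW r k j) := fun t => by
    simpa [Equiv.swap_apply_left] using Ts_Tz r n κ c₀ c k j k t
  have f2 : ∀ t, cT r n κ c₀ c (sW r k j) * cT r n κ c₀ c (zetaW r j t)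
      = cT r n κ c₀ c (zetaW r k t) * cT r n κ c₀ c (sW r k j) := fun t => by
    simpa [Equiv.swap_apply_right] using Ts_Tz r n κ c₀ c k j j t
  by_cases hak : a = k
  · subst hak
    have haj : a ≠ j := hkj
    rw [if_pos rfl, if_neg haj, sub_zero]
    rw [Trefl_decomp, Trefl_decomp]
    simp only [mul_assoc]
    rw [hmul1 (Tz_mul r n κ c₀ c a m l), Tz_mul r n κ c₀ c a (-(l + m)) m,
      show m + l = l + m from add_comm m l,
      show -(l + m) + m = -l by ring]
  · by_cases haj : a = j
    · subst haj
      have hka : k ≠ a := hkj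
      rw [if_neg hak, if_pos rfl, add_zero]
      rw [Trefl_decomp, Trefl_decomp]
      simp only [mul_assoc]
      rw [hmul (Tz_comm r n κ c₀ c a k m l), ← hmul (f1 m),
        Tz_mul r n κ c₀ c k m (-l), f1 (m + -l), hmul (f1 (-(l - m))), f2 m,
        hmul (Tz_comm r n κ c₀ c a k (-(l - m)) m),
        hmul1 (Tz_mul r n κ c₀ c k (l - m) m),
        show l - m + m = l by ring, show -(l - m) = m + -l by ring]
    · rw [if_neg hak, if_neg haj, add_zero, sub_zero]
      have f0 : cT r n κ c₀ c (sW r k j) * cT r n κ c₀ c (zetaW r a m)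
          = cT r n κ c₀ c (zetaW r a m) * cT r n κ c₀ c (sW r k j) := by
        simpa [Equiv.swap_apply_of_ne_of_ne hak haj]
          using Ts_Tz r n κ c₀ c k j a m
      rw [Trefl_decomp]
      simp only [mul_assoc]
      rw [hmul (Tz_comm r n κ c₀ c a k m l), ← hmul f0,
        Tz_comm r n κ c₀ c a k m (-l)]

-- ===== reindexing of periodic sums =====

lemma per_ext {M : Type*} {r : ℕ} (hr : 1 ≤ r) (F : ℤ → M) (hF : ∀ l, F (l + r) = F l)
    {l m : ℤ} (h : (l : ZMod r) = (m : ZMod r)) : F l = F m := by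
  haveI : NeZero r := ⟨by omega⟩
  have hper : ∀ (z : ℤ) (l : ℤ), F (l + z * r) = F l := by
    intro z
    induction z using Int.induction_on with
    | zero => intro l; simp
    | succ k ih =>
      intro l
      have h1 : l + ((k : ℤ) + 1) * r = l + k * r + r := by ring
      rw [h1, hF, ih]
    | pred k ih =>
      intro l
      have h2 := hF (l + (-(k : ℤ) - 1) * r)
      rw [show l + (-(k : ℤ) - 1) * r + r = l + (-(k : ℤ)) * r by ring] at h2
      exact h2.symm.trans (ih l)
  have hdvd : (r : ℤ) ∣ m - l := by
    have h0 : ((m - l : ℤ) : ZMod r) = 0 := by push_cast; rw [h]; ring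
    exact (ZMod.intCast_zmod_eq_zero_iff_dvd _ _).mp h0
  obtain ⟨z, hz⟩ := hdvd
  have hm : m = l + z * r := by rw [mul_comm] at hz; linarith
  rw [hm]
  exact (hper z l).symm

lemma zmod_coe_val_coe {r : ℕ} [NeZero r] (z : ZMod r) :
    (((z.val : ℕ) : ℤ) : ZMod r) = z := by
  rw [Int.cast_natCast]; exact ZMod.natCast_rightInverse z

lemma sum_range_eq_sum_zmod {M : Type*} [AddCommMonoid M] {r : ℕ} [NeZero r]
    (G : ZMod r → M) :
    ∑ l ∈ Finset.range r, G ((l : ℕ) : ZMod r) = ∑ z : ZMod r, G z := by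
  refine Finset.sum_bij (fun l _ => ((l : ℕ) : ZMod r)) ?_ ?_ ?_ ?_
  · intros; exact Finset.mem_univ _
  · intro l1 h1 l2 h2 he
    have := congrArg ZMod.val he
    rwa [ZMod.val_cast_of_lt (Finset.mem_range.mp h1),
      ZMod.val_cast_of_lt (Finset.mem_range.mp h2)] at this
  · intro z _
    exact ⟨z.val, Finset.mem_range.mpr (ZMod.val_lt z), ZMod.natCast_rightInverse z⟩
  · intros; rfl

lemma sum_shift {M : Type*} [AddCommMonoid M] {r : ℕ} (hr : 1 ≤ r) (F : ℤ → M)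
    (hF : ∀ l, F (l + r) = F l) (k : ℤ) :
    ∑ l ∈ Finset.range r, F ((l : ℤ) + k) = ∑ l ∈ Finset.range r, F l := by
  haveI : NeZero r := ⟨by omega⟩
  have step1 : ∀ l : ℕ, F ((l : ℤ) + k)
      = F ((((l : ZMod r) + (k : ZMod r)).val : ℤ)) := by
    intro l
    apply per_ext hr F hF
    rw [zmod_coe_val_coe]
    push_cast
    ring
  have step4 : ∀ l : ℕ, F (l : ℤ) = F ((((l : ZMod r)).val : ℤ)) := by
    intro l
    apply per_ext hr F hF
    rw [zmod_coe_val_coe, Int.cast_natCast]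
  calc ∑ l ∈ Finset.range r, F ((l : ℤ) + k)
      = ∑ l ∈ Finset.range r,
          (fun z : ZMod r => F ((z + (k : ZMod r)).val : ℤ)) ((l : ℕ) : ZMod r) :=
        Finset.sum_congr rfl (fun l _ => step1 l)
    _ = ∑ z : ZMod r, F ((z + (k : ZMod r)).val : ℤ) :=
        sum_range_eq_sum_zmod (fun z : ZMod r => F ((z + (k : ZMod r)).val : ℤ))
    _ = ∑ z : ZMod r, F ((z.val : ℤ)) :=
        Fintype.sum_equiv (Equiv.addRight ((k : ZMod r))) _ _ (fun z => rfl)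
    _ = ∑ l ∈ Finset.range r, (fun z : ZMod r => F ((z.val : ℤ))) ((l : ℕ) : ZMod r) :=
        (sum_range_eq_sum_zmod (fun z : ZMod r => F ((z.val : ℤ)))).symm
    _ = ∑ l ∈ Finset.range r, F (l : ℤ) :=
        Finset.sum_congr rfl (fun l _ => (step4 l).symm)

lemma sum_reflect {M : Type*} [AddCommMonoid M] {r : ℕ} (hr : 1 ≤ r) (F : ℤ → M)
    (hF : ∀ l, F (l + r) = F l) (k : ℤ) :
    ∑ l ∈ Finset.range r, F (k - (l : ℤ)) = ∑ l ∈ Finset.range r, F l := by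
  haveI : NeZero r := ⟨by omega⟩
  have step1 : ∀ l : ℕ, F (k - (l : ℤ))
      = F ((((k : ZMod r) - (l : ZMod r)).val : ℤ)) := by
    intro l
    apply per_ext hr F hF
    rw [zmod_coe_val_coe]
    push_cast
    ring
  have step4 : ∀ l : ℕ, F (l : ℤ) = F ((((l : ZMod r)).val : ℤ)) := by
    intro l
    apply per_ext hr F hF
    rw [zmod_coe_val_coe, Int.cast_natCast]
  calc ∑ l ∈ Finset.range r, F (k - (l : ℤ))
      = ∑ l ∈ Finset.range r,
          (fun z : ZMod r => F (((k : ZMod r) - z).val : ℤ)) ((l : ℕ) : ZMod r) :=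
        Finset.sum_congr rfl (fun l _ => step1 l)
    _ = ∑ z : ZMod r, F (((k : ZMod r) - z).val : ℤ) :=
        sum_range_eq_sum_zmod (fun z : ZMod r => F (((k : ZMod r) - z).val : ℤ))
    _ = ∑ z : ZMod r, F ((z.val : ℤ)) :=
        Fintype.sum_equiv (Equiv.subLeft ((k : ZMod r))) _ _ (fun z => rfl)
    _ = ∑ l ∈ Finset.range r, (fun z : ZMod r => F ((z.val : ℤ))) ((l : ℕ) : ZMod r) :=
        (sum_range_eq_sum_zmod (fun z : ZMod r => F ((z.val : ℤ)))).symm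
    _ = ∑ l ∈ Finset.range r, F (l : ℤ) :=
        Finset.sum_congr rfl (fun l _ => (step4 l).symm)

-- ===== commutation of diagonal elements with z_k =====

lemma Tz_Phi (hr : 1 ≤ r) (a : Fin n) (m : ℤ) (k : Fin n) :
    cT r n κ c₀ c (zetaW r a m) * cPhi r n κ c₀ c k
      = cPhi r n κ c₀ c k * cT r n κ c₀ c (zetaW r a m) := by
  rw [cPhi, Finset.mul_sum, Finset.sum_mul]
  refine Finset.sum_congr rfl ?_
  intro j hj
  have hkj : k ≠ j := (ne_of_gt (Finset.mem_filter.mp hj).2)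
  rw [Finset.mul_sum, Finset.sum_mul]
  calc ∑ l ∈ Finset.range r,
        cT r n κ c₀ c (zetaW r a m) * cT r n κ c₀ c (reflW r k j (l : ℤ))
      = ∑ l ∈ Finset.range r,
          (fun t : ℤ => cT r n κ c₀ c (reflW r k j t) * cT r n κ c₀ c (zetaW r a m))
            ((l : ℤ) + ((if a = k then m else 0) - (if a = j then m else 0))) := by
        refine Finset.sum_congr rfl (fun l _ => ?_)
        rw [Tz_Trefl r n κ c₀ c a k j hkj m (l : ℤ)]
        show _ = cT r n κ c₀ c (reflW r k j ((l : ℤ) +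
            ((if a = k then m else 0) - (if a = j then m else 0))))
          * cT r n κ c₀ c (zetaW r a m)
        rw [show (l : ℤ) + ((if a = k then m else 0) - (if a = j then m else 0))
          = (l : ℤ) + (if a = k then m else 0) - (if a = j then m else 0) by ring]
    _ = ∑ l ∈ Finset.range r,
          (fun t : ℤ => cT r n κ c₀ c (reflW r k j t) * cT r n κ c₀ c (zetaW r a m))
            (l : ℤ) :=
        sum_shift hr (fun t : ℤ => cT r n κ c₀ c (reflW r k j t)
            * cT r n κ c₀ c (zetaW r a m)) (fun t => by
          show cT r n κ c₀ c (reflW r k j (t + r)) * _ = _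
          rw [Trefl_period r n κ c₀ c hr k j t]) _

lemma Tz_z (hr : 1 ≤ r) (a : Fin n) (m : ℤ) (k : Fin n) :
    cT r n κ c₀ c (zetaW r a m) * cz r n κ c₀ c k
      = cz r n κ c₀ c k * cT r n κ c₀ c (zetaW r a m) := by
  rw [cz, mul_add, add_mul, Tz_YX, mul_smul_comm, smul_mul_assoc,
    Tz_Phi r n κ c₀ c hr]

lemma Tpair_z (hr : 1 ≤ r) (a b : Fin n) (m : ℤ) (k : Fin n) :
    cT r n κ c₀ c (pairW r a b m) * cz r n κ c₀ c k
      = cz r n κ c₀ c k * cT r n κ c₀ c (pairW r a b m) := by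
  rw [Tpair_decomp, mul_assoc, Tz_z r n κ c₀ c hr, ← mul_assoc,
    Tz_z r n κ c₀ c hr, mul_assoc]

lemma Pi_z (hr : 1 ≤ r) (i j k : Fin n) :
    cPi r n κ c₀ c i j * cz r n κ c₀ c k
      = cz r n κ c₀ c k * cPi r n κ c₀ c i j := by
  rw [cPi, Finset.sum_mul, Finset.mul_sum]
  exact Finset.sum_congr rfl fun l _ => Tpair_z r n κ c₀ c hr i j (l : ℤ) k

-- ===== π and the transposition =====

lemma sum_pair_neg (hr : 1 ≤ r) (i i' : Fin n) :
    ∑ l ∈ Finset.range r, cT r n κ c₀ c (pairW r i i' (-(l : ℤ)))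
      = cPi r n κ c₀ c i i' := by
  rw [cPi]
  have := sum_reflect hr (fun l => cT r n κ c₀ c (pairW r i i' l))
    (fun l => Tpair_period r n κ c₀ c hr i i' l) 0
  simpa [zero_sub] using this

lemma Ts_Pi (hr : 1 ≤ r) (i i' : Fin n) :
    cT r n κ c₀ c (sW r i i') * cPi r n κ c₀ c i i'
      = cPi r n κ c₀ c i i' * cT r n κ c₀ c (sW r i i') := by
  rw [cPi, Finset.mul_sum, Finset.sum_mul]
  have e : ∀ l : ℤ, cT r n κ c₀ c (sW r i i') * cT r n κ c₀ c (pairW r i i' l)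
      = cT r n κ c₀ c (pairW r i i' (-l)) * cT r n κ c₀ c (sW r i i') := by
    intro l
    have h := Ts_Tpair r n κ c₀ c i i' i i' l
    rw [Equiv.swap_apply_left, Equiv.swap_apply_right] at h
    rw [h]
    congr 1
    refine cT_congr r n κ c₀ c _ _ ?_
    show zmat r n i' l * zmat r n i (-l) = zmat r n i (-l) * zmat r n i' (- -l)
    rw [neg_neg, zmat_comm]
  calc ∑ l ∈ Finset.range r,
        cT r n κ c₀ c (sW r i i') * cT r n κ c₀ c (pairW r i i' (l : ℤ))
      = ∑ l ∈ Finset.range r,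
          cT r n κ c₀ c (pairW r i i' (-(l : ℤ))) * cT r n κ c₀ c (sW r i i') :=
        Finset.sum_congr rfl (fun l _ => e (l : ℤ))
    _ = (∑ l ∈ Finset.range r, cT r n κ c₀ c (pairW r i i' (-(l : ℤ))))
          * cT r n κ c₀ c (sW r i i') := (Finset.sum_mul _ _ _).symm
    _ = ∑ l ∈ Finset.range r,
          cT r n κ c₀ c (pairW r i i' (l : ℤ)) * cT r n κ c₀ c (sW r i i') := by
        rw [sum_pair_neg r n κ c₀ c hr, cPi, Finset.sum_mul]

-- ===== products of reflections with the transposition =====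

lemma refl_s_high (i i' : Fin n) (l : ℤ) :
    cT r n κ c₀ c (reflW r i' i l) * cT r n κ c₀ c (sW r i i')
      = cT r n κ c₀ c (pairW r i i' (-l)) := by
  have hs : cT r n κ c₀ c (sW r i' i) = cT r n κ c₀ c (sW r i i') :=
    cT_congr r n κ c₀ c _ _ (smat_comm' i' i)
  have hpair : cT r n κ c₀ c (pairW r i i' (-l))
      = cT r n κ c₀ c (zetaW r i (-l)) * cT r n κ c₀ c (zetaW r i' l) := by
    rw [Tpair_decomp, neg_neg]
  have h2 : cT r n κ c₀ c (sW r i i') * cT r n κ c₀ c (zetaW r i' (-l))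
      = cT r n κ c₀ c (zetaW r i (-l)) * cT r n κ c₀ c (sW r i i') := by
    simpa [Equiv.swap_apply_right] using Ts_Tz r n κ c₀ c i i' i' (-l)
  rw [Trefl_decomp, hs]
  simp only [mul_assoc]
  rw [hmul h2, Ts_sq, mul_one, Tz_comm r n κ c₀ c i' i l (-l)]
  exact hpair.symm

lemma refl_s_low (i i' : Fin n) (l : ℤ) :
    cT r n κ c₀ c (reflW r i i' l) * cT r n κ c₀ c (sW r i i')
      = cT r n κ c₀ c (pairW r i i' l) := by
  have h2 : cT r n κ c₀ c (sW r i i') * cT r n κ c₀ c (zetaW r i (-l))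
      = cT r n κ c₀ c (zetaW r i' (-l)) * cT r n κ c₀ c (sW r i i') := by
    simpa [Equiv.swap_apply_left] using Ts_Tz r n κ c₀ c i i' i (-l)
  rw [Trefl_decomp]
  simp only [mul_assoc]
  rw [hmul h2, Ts_sq, mul_one, ← Tpair_decomp]

-- ===== key intertwiner relations =====

lemma sum_refl_s_high (hr : 1 ≤ r) (i i' : Fin n) :
    ∑ l ∈ Finset.range r,
        cT r n κ c₀ c (reflW r i' i (l : ℤ)) * cT r n κ c₀ c (sW r i i')
      = cPi r n κ c₀ c i i' := by
  rw [← sum_pair_neg r n κ c₀ c hr i i']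
  exact Finset.sum_congr rfl fun l _ => refl_s_high r n κ c₀ c i i' (l : ℤ)

lemma sum_refl_s_low (i i' : Fin n) :
    ∑ l ∈ Finset.range r,
        cT r n κ c₀ c (reflW r i i' (l : ℤ)) * cT r n κ c₀ c (sW r i i')
      = cPi r n κ c₀ c i i' := by
  rw [cPi]
  exact Finset.sum_congr rfl fun l _ => refl_s_low r n κ c₀ c i i' (l : ℤ)

section
variable {i i' : Fin n}

lemma filter_split {n : ℕ} {i i' : Fin n} (h : (i' : ℕ) = (i : ℕ) + 1) :
    Finset.univ.filter (fun j : Fin n => j < i')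
      = insert i (Finset.univ.filter (fun j : Fin n => j < i)) := by
  ext j
  simp only [Finset.mem_filter, Finset.mem_insert, Finset.mem_univ, true_and]
  rw [Fin.lt_def, Fin.lt_def, Fin.ext_iff]
  omega

lemma swap_fix_low {n : ℕ} {i i' : Fin n} (h : (i' : ℕ) = (i : ℕ) + 1) {j : Fin n} (hj : j < i) :
    Equiv.swap i i' j = j := by
  refine Equiv.swap_apply_of_ne_of_ne (ne_of_lt hj) ?_
  have : (j : ℕ) < (i : ℕ) := hj
  exact Fin.ne_of_val_ne (by omega)

lemma Ts_Phi_low (h : (i' : ℕ) = (i : ℕ) + 1) :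
    cT r n κ c₀ c (sW r i i') * cPhi r n κ c₀ c i
      = ∑ j ∈ Finset.univ.filter (fun j : Fin n => j < i), ∑ l ∈ Finset.range r,
          cT r n κ c₀ c (reflW r i' j (l : ℤ)) * cT r n κ c₀ c (sW r i i') := by
  rw [cPhi, Finset.mul_sum]
  refine Finset.sum_congr rfl fun j hj => ?_
  rw [Finset.mul_sum]
  refine Finset.sum_congr rfl fun l _ => ?_
  have hfix := swap_fix_low h (Finset.mem_filter.mp hj).2
  have := Ts_Trefl r n κ c₀ c i i' i j (l : ℤ)
  rwa [Equiv.swap_apply_left, hfix] at this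

lemma Ts_Phi_key_low (hr : 1 ≤ r) (h : (i' : ℕ) = (i : ℕ) + 1) :
    cT r n κ c₀ c (sW r i i') * cPhi r n κ c₀ c i
      = cPhi r n κ c₀ c i' * cT r n κ c₀ c (sW r i i') - cPi r n κ c₀ c i i' := by
  rw [Ts_Phi_low r n κ c₀ c h]
  have hsplit : cPhi r n κ c₀ c i'
      = (∑ l ∈ Finset.range r, cT r n κ c₀ c (reflW r i' i (l : ℤ)))
        + ∑ j ∈ Finset.univ.filter (fun j : Fin n => j < i), ∑ l ∈ Finset.range r,
            cT r n κ c₀ c (reflW r i' j (l : ℤ)) := by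
    rw [cPhi, filter_split h, Finset.sum_insert (by simp)]
  rw [hsplit, add_mul, Finset.sum_mul, sum_refl_s_high r n κ c₀ c hr]
  rw [add_sub_cancel_left, Finset.sum_mul]
  exact Finset.sum_congr rfl fun j _ => (Finset.sum_mul _ _ _).symm

lemma Ts_Phi_key_high (hr : 1 ≤ r) (h : (i' : ℕ) = (i : ℕ) + 1) :
    cT r n κ c₀ c (sW r i i') * cPhi r n κ c₀ c i'
      = cPhi r n κ c₀ c i * cT r n κ c₀ c (sW r i i') + cPi r n κ c₀ c i i' := by
  have hsplit : cPhi r n κ c₀ c i'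
      = (∑ l ∈ Finset.range r, cT r n κ c₀ c (reflW r i' i (l : ℤ)))
        + ∑ j ∈ Finset.univ.filter (fun j : Fin n => j < i), ∑ l ∈ Finset.range r,
            cT r n κ c₀ c (reflW r i' j (l : ℤ)) := by
    rw [cPhi, filter_split h, Finset.sum_insert (by simp)]
  rw [hsplit, mul_add, Finset.mul_sum]
  have part1 : ∑ l ∈ Finset.range r,
      cT r n κ c₀ c (sW r i i') * cT r n κ c₀ c (reflW r i' i (l : ℤ))
      = cPi r n κ c₀ c i i' := by
    rw [cPi]
    refine Finset.sum_congr rfl fun l _ => ?_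
    have h1 := Ts_Trefl r n κ c₀ c i i' i' i (l : ℤ)
    rw [Equiv.swap_apply_right, Equiv.swap_apply_left] at h1
    rw [h1, refl_s_low r n κ c₀ c i i' (l : ℤ)]
  have part2 : cT r n κ c₀ c (sW r i i')
        * ∑ j ∈ Finset.univ.filter (fun j : Fin n => j < i), ∑ l ∈ Finset.range r,
            cT r n κ c₀ c (reflW r i' j (l : ℤ))
      = cPhi r n κ c₀ c i * cT r n κ c₀ c (sW r i i') := by
    rw [Finset.mul_sum, cPhi, Finset.sum_mul]
    refine Finset.sum_congr rfl fun j hj => ?_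
    rw [Finset.mul_sum, Finset.sum_mul]
    refine Finset.sum_congr rfl fun l _ => ?_
    have hfix := swap_fix_low h (Finset.mem_filter.mp hj).2
    have h1 := Ts_Trefl r n κ c₀ c i i' i' j (l : ℤ)
    rwa [Equiv.swap_apply_right, hfix] at h1
  rw [part1, part2, add_comm]

lemma Ts_z_low (hr : 1 ≤ r) (h : (i' : ℕ) = (i : ℕ) + 1) :
    cT r n κ c₀ c (sW r i i') * cz r n κ c₀ c i
      = cz r n κ c₀ c i' * cT r n κ c₀ c (sW r i i') - c₀ • cPi r n κ c₀ c i i' := by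
  have hYX : cT r n κ c₀ c (sW r i i') * (cY r n κ c₀ c i * cX r n κ c₀ c i)
      = (cY r n κ c₀ c i' * cX r n κ c₀ c i') * cT r n κ c₀ c (sW r i i') := by
    have := Ts_YX r n κ c₀ c i i' i
    rwa [Equiv.swap_apply_left] at this
  have hPhi : cT r n κ c₀ c (sW r i i') * cPhi r n κ c₀ c i
      = cPhi r n κ c₀ c i' * cT r n κ c₀ c (sW r i i') - cPi r n κ c₀ c i i' := by
    rw [Ts_Phi_low r n κ c₀ c h]
    have hsplit : cPhi r n κ c₀ c i'
        = (∑ l ∈ Finset.range r, cT r n κ c₀ c (reflW r i' i (l : ℤ)))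
          + ∑ j ∈ Finset.univ.filter (fun j : Fin n => j < i), ∑ l ∈ Finset.range r,
              cT r n κ c₀ c (reflW r i' j (l : ℤ)) := by
      rw [cPhi, filter_split h, Finset.sum_insert (by simp)]
    rw [hsplit, add_mul, Finset.sum_mul, sum_refl_s_high r n κ c₀ c hr,
      add_sub_cancel_left, Finset.sum_mul]
    exact Finset.sum_congr rfl fun j _ => (Finset.sum_mul _ _ _).symm
  rw [cz, cz, mul_add, mul_smul_comm, hYX, hPhi, smul_sub, add_mul,
    smul_mul_assoc, add_sub_assoc]

lemma Ts_z_high (hr : 1 ≤ r) (h : (i' : ℕ) = (i : ℕ) + 1) :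
    cT r n κ c₀ c (sW r i i') * cz r n κ c₀ c i'
      = cz r n κ c₀ c i * cT r n κ c₀ c (sW r i i') + c₀ • cPi r n κ c₀ c i i' := by
  have hYX : cT r n κ c₀ c (sW r i i') * (cY r n κ c₀ c i' * cX r n κ c₀ c i')
      = (cY r n κ c₀ c i * cX r n κ c₀ c i) * cT r n κ c₀ c (sW r i i') := by
    have := Ts_YX r n κ c₀ c i i' i'
    rwa [Equiv.swap_apply_right] at this
  rw [cz, cz, mul_add, mul_smul_comm, hYX, Ts_Phi_key_high r n κ c₀ c hr h,
    smul_add, add_mul, smul_mul_assoc, add_assoc]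

end

-- ===== abstract assembly =====

lemma assembly {H : Type*} [Ring H] [Algebra ℂ H] (A t p : H) (d : ℂ)
    (h1 : t * A = -(A * t) - (2 * d) • p)
    (h2 : p * A = A * p) (h3 : t * p = p * t) (h4 : t * t = 1) :
    (A * t + d • p) * (A * t + d • p) = d ^ 2 • (p * p) - A * A := by
  have key : ∀ w : H, t * (A * w) = -(A * (t * w)) - (2 * d) • (p * w) := by
    intro w
    rw [← mul_assoc, h1, sub_mul, neg_mul, smul_mul_assoc, mul_assoc]
  rw [add_mul, mul_add, mul_add]
  rw [mul_assoc A t (A * t), key t, h4, mul_one]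
  rw [mul_assoc A t (d • p), mul_smul_comm d t p, h3, mul_smul_comm d A (p * t)]
  rw [smul_mul_assoc d p (A * t), ← mul_assoc p A t, h2, mul_assoc A p t]
  rw [smul_mul_assoc d p (d • p), mul_smul_comm d p p, smul_smul, ← sq]
  rw [mul_sub, mul_neg, mul_smul_comm (2 * d) A (p * t)]
  rw [two_mul, add_smul]
  abel
/-- `σ̃_i² = c₀² π_i² - (z_i - z_{i+1})²`. -/
theorem stmt10 (hr : 1 ≤ r) (hn : 2 ≤ n) (i i' : Fin n) (h : (i' : ℕ) = (i : ℕ) + 1) :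
    cSigma r n κ c₀ c i i' ^ 2 =
      c₀ ^ 2 • cPi r n κ c₀ c i i' ^ 2 - (cz r n κ c₀ c i - cz r n κ c₀ c i') ^ 2 := by
  have h1 : cT r n κ c₀ c (sW r i i') * (cz r n κ c₀ c i - cz r n κ c₀ c i')
      = -((cz r n κ c₀ c i - cz r n κ c₀ c i') * cT r n κ c₀ c (sW r i i'))
        - (2 * c₀) • cPi r n κ c₀ c i i' := by
    rw [mul_sub, Ts_z_low r n κ c₀ c hr h, Ts_z_high r n κ c₀ c hr h,
      sub_mul, two_mul, add_smul]
    abel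
  have h2 : cPi r n κ c₀ c i i' * (cz r n κ c₀ c i - cz r n κ c₀ c i')
      = (cz r n κ c₀ c i - cz r n κ c₀ c i') * cPi r n κ c₀ c i i' := by
    rw [mul_sub, sub_mul, Pi_z r n κ c₀ c hr, Pi_z r n κ c₀ c hr]
  have h3 : cT r n κ c₀ c (sW r i i') * cPi r n κ c₀ c i i'
      = cPi r n κ c₀ c i i' * cT r n κ c₀ c (sW r i i') := Ts_Pi r n κ c₀ c hr i i'
  have h4 : cT r n κ c₀ c (sW r i i') * cT r n κ c₀ c (sW r i i') = 1 :=
    Ts_sq r n κ c₀ c i i'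
  simp only [cSigma, pow_two]
  rw [show c₀ * c₀ = c₀ ^ 2 from (sq c₀).symm]
  exact assembly _ _ _ c₀ h1 h2 h3 h4
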